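/- If a 3SAT formula has a satisfying assignment, then the reduced auto-bidding market has an equilibrium of revenue exactly 0.075 + m: set α = 5 for the variable bidder corresponding to the true literal of each variable and α = 1 for the false one, and α = 1 for all clause bidders 3^c, 4^c, 5^c; then each 'true' variable bidder wins both of its variable goods at total price 0.075/n, each bidder 3^c wins good 3^c at price 0.5 (since some true literal's bidder bids 5 · 0.1 = 0.5 on good 3^c), goods 4^c are split between 4^c and 5^c at price 0.5, all ROI constraints are binding, and total revenue is n·(0.075/n) + m·0.5 + m·0.5 = 0.075 + m. -/

import Mathlib

/-- Auto-bidding equilibrium over arbitrary finite sets of bidders and goods. -/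
structure ABEquilibrium {ι γ : Type} [Fintype ι] [Fintype γ] (A : ℝ) (v : ι → γ → ℝ)
    (α : ι → ℝ) (x : ι → γ → ℝ) (p : γ → ℝ) : Prop where
  mult_lb : ∀ i, 1 ≤ α i
  mult_ub : ∀ i, α i ≤ A
  alloc_nonneg : ∀ i j, 0 ≤ x i j
  alloc_le_one : ∀ i j, x i j ≤ 1
  highest : ∀ i j, 0 < x i j → ∀ k, α k * v k j ≤ α i * v i j
  second_price : ∀ i j, 0 < x i j →
    p j = sSup (insert 0 {b | ∃ k, k ≠ i ∧ b = α k * v k j})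
  full_alloc : ∀ j, ∑ i, x i j = 1
  roi : ∀ i, ∑ j, x i j * p j ≤ ∑ j, x i j * v i j
  maximal : ∀ i, α i ≠ A → ∑ j, x i j * p j = ∑ j, x i j * v i j

/-- Bidders of the 3SAT reduction. -/
abbrev RedBidder (nv mc : ℕ) := (Fin nv × Bool) ⊕ (Fin mc × Fin 3)

/-- Goods of the 3SAT reduction. -/
abbrev RedGood (nv mc : ℕ) := (Fin nv × Bool) ⊕ (Fin mc × Fin 2)

/-- Valuations of the 3SAT reduction. -/
noncomputable def redval (nv mc : ℕ) (C : Fin mc → Fin 3 → Fin nv × Bool) :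
    RedBidder nv mc → RedGood nv mc → ℝ
  | Sum.inl (j, b), Sum.inl (j', b') =>
      if j = j' then (if b = b' then 0.05 / nv else 0.025 / nv) else 0
  | Sum.inl (j, b), Sum.inr (c, g) =>
      if g = 0 ∧ ∃ t, C c t = (j, b) then 0.1 else 0
  | Sum.inr _, Sum.inl _ => 0
  | Sum.inr (c, t), Sum.inr (c', g) =>
      if c = c' then
        if t = 0 then (if g = 0 then 0.5 else 0.1)
        else (if g = 1 then 0.5 else 0)
      else 0


/-- The multipliers induced by a satisfying assignment `σ`: `5` for the variable bidder of the
true literal of each variable, `1` for the false one, and `1` for all clause bidders. -/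
noncomputable def redmult (nv mc : ℕ) (σ : Fin nv → Bool) : RedBidder nv mc → ℝ
  | Sum.inl (j, s) => if σ j = s then 5 else 1
  | Sum.inr _ => 1

noncomputable def redx (nv mc : ℕ) (σ : Fin nv → Bool) :
    RedBidder nv mc → RedGood nv mc → ℝ
  | Sum.inl (j, b), Sum.inl (j', _) => if j = j' ∧ σ j = b then 1 else 0
  | Sum.inl _, Sum.inr _ => 0
  | Sum.inr _, Sum.inl _ => 0
  | Sum.inr (c, t), Sum.inr (c', g) =>
      if c = c' then
        (if t = 0 then (if g = 0 then 1 else 0) else (if g = 1 then 1/2 else 0))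
      else 0

noncomputable def redp (nv mc : ℕ) (σ : Fin nv → Bool) : RedGood nv mc → ℝ
  | Sum.inl (j, b) => if σ j = b then 0.025 / nv else 0.05 / nv
  | Sum.inr _ => 0.5

private lemma csSup_insert_zero {S : Set ℝ} {a : ℝ} (h0 : 0 ≤ a) (ha : a ∈ S)
    (hub : ∀ b ∈ S, b ≤ a) : sSup (insert 0 S) = a :=
  IsGreatest.csSup_eq ⟨Set.mem_insert_of_mem _ ha, fun b hb => by
    rcases Set.mem_insert_iff.mp hb with rfl | hb
    · exact h0
    · exact hub b hb⟩

lemma bid_var_le (nv mc : ℕ) (C : Fin mc → Fin 3 → Fin nv × Bool) (σ : Fin nv → Bool)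
    (hnv : 0 < nv) (k : RedBidder nv mc) (j' : Fin nv) (b' : Bool)
    (hk : k ≠ Sum.inl (j', σ j')) :
    redmult nv mc σ k * redval nv mc C k (Sum.inl (j', b')) ≤
      redp nv mc σ (Sum.inl (j', b')) := by
  have hn0 : (0:ℝ) < nv := by exact_mod_cast hnv
  have h1 : (0:ℝ) ≤ 0.025 / nv := by positivity
  have h2 : (0:ℝ) ≤ 0.05 / nv := by positivity
  have h3 : (0.025:ℝ) / nv ≤ 0.05 / nv := by
    apply div_le_div_of_nonneg_right ?_ hn0.le
    norm_num
  cases k with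
  | inr q =>
    obtain ⟨c, t⟩ := q
    simp only [redmult, redval, redp, mul_zero, one_mul]
    split_ifs <;> assumption
  | inl q =>
    obtain ⟨j, b⟩ := q
    by_cases hj : j = j'
    · subst hj
      have hb : b ≠ σ j := by
        intro h; exact hk (by rw [h])
      simp only [redmult, redval, redp, if_pos rfl, if_neg (Ne.symm hb), one_mul]
      cases b' <;> cases h : σ j <;> simp_all <;> assumption
    · simp only [redmult, redval, redp, if_neg hj, mul_zero]
      split_ifs <;> assumption

lemma bid_clause_le (nv mc : ℕ) (C : Fin mc → Fin 3 → Fin nv × Bool) (σ : Fin nv → Bool)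
    (k : RedBidder nv mc) (c' : Fin mc) (g : Fin 2) :
    redmult nv mc σ k * redval nv mc C k (Sum.inr (c', g)) ≤ 0.5 := by
  cases k with
  | inl q => obtain ⟨j, b⟩ := q; simp only [redmult, redval]; split_ifs <;> norm_num
  | inr q => obtain ⟨c, t⟩ := q; simp only [redmult, redval, one_mul]; split_ifs <;> norm_num
lemma redeq (nv mc : ℕ) (hnv : 0 < nv) (C : Fin mc → Fin 3 → Fin nv × Bool)
    (A : ℝ) (hA : 5 ≤ A)
    (σ : Fin nv → Bool) (hσ : ∀ c, ∃ t, (C c t).2 = σ (C c t).1) :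
    ABEquilibrium A (redval nv mc C) (redmult nv mc σ) (redx nv mc σ) (redp nv mc σ) := by
  have hn0 : (0:ℝ) < nv := by exact_mod_cast hnv
  have hn0' : (nv:ℝ) ≠ 0 := ne_of_gt hn0
  have hkey : ∀ i, ∑ g, redx nv mc σ i g * redp nv mc σ g
      = ∑ g, redx nv mc σ i g * redval nv mc C i g := by
    intro i
    cases i with
    | inl q =>
      obtain ⟨j, b⟩ := q
      by_cases hb : σ j = b
      · rw [Fintype.sum_sum_type, Fintype.sum_sum_type]
        have hz : ∀ (f : RedGood nv mc → ℝ),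
            ∑ q : Fin mc × Fin 2,
              redx nv mc σ (Sum.inl (j, b)) (Sum.inr q) * f (Sum.inr q) = 0 :=
          fun f => Finset.sum_eq_zero (fun q _ => by obtain ⟨c, g⟩ := q; simp [redx])
        rw [hz, hz, add_zero, add_zero, Fintype.sum_prod_type, Fintype.sum_prod_type]
        simp only [redx, hb, and_true, Fintype.sum_bool, ite_mul, one_mul, zero_mul]
        rw [Finset.sum_add_distrib, Finset.sum_add_distrib]
        simp only [Finset.sum_ite_eq, Finset.mem_univ, if_true]
        subst hb
        cases h : σ j <;> simp [redp, redval, h] <;> ring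
      · have hz : ∀ g, redx nv mc σ (Sum.inl (j, b)) g = 0 := by
          intro g; rcases g with ⟨j', b'⟩ | ⟨c, gg⟩ <;> simp [redx, hb]
        simp [hz]
    | inr q =>
      obtain ⟨c, t⟩ := q
      rw [Fintype.sum_sum_type, Fintype.sum_sum_type]
      have hz : ∀ (f : RedGood nv mc → ℝ),
          ∑ q : Fin nv × Bool,
            redx nv mc σ (Sum.inr (c, t)) (Sum.inl q) * f (Sum.inl q) = 0 :=
        fun f => Finset.sum_eq_zero (fun q _ => by obtain ⟨j, b⟩ := q; simp [redx])
      rw [hz, hz, zero_add, zero_add, Fintype.sum_prod_type, Fintype.sum_prod_type]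
      fin_cases t <;>
        simp [redx, redval, redp, Fin.sum_univ_two, ite_mul, one_mul, zero_mul,
          Finset.sum_ite_eq, Finset.sum_ite_eq'] <;> norm_num
  refine ⟨?_, ?_, ?_, ?_, ?_, ?_, ?_, fun i => le_of_eq (hkey i), fun i _ => hkey i⟩
  · rintro (⟨j, b⟩ | ⟨c, t⟩)
    · simp only [redmult]; split_ifs <;> norm_num
    · simp only [redmult]; norm_num
  · rintro (⟨j, b⟩ | ⟨c, t⟩)
    · simp only [redmult]; split_ifs <;> linarith
    · simp only [redmult]; linarith
  · rintro (⟨j, b⟩ | ⟨c, t⟩) (⟨j', b'⟩ | ⟨c', g⟩) <;> simp only [redx] <;>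
      (try split_ifs) <;> norm_num
  · rintro (⟨j, b⟩ | ⟨c, t⟩) (⟨j', b'⟩ | ⟨c', g⟩) <;> simp only [redx] <;>
      (try split_ifs) <;> norm_num
  · -- highest
    rintro (⟨j, b⟩ | ⟨c, t⟩) (⟨j', b'⟩ | ⟨c', g⟩) hx k
    · simp only [redx] at hx
      split_ifs at hx with h
      · obtain ⟨rfl, hb⟩ := h
        subst hb
        by_cases hk : k = Sum.inl (j, σ j)
        · subst hk; exact le_refl _
        · refine le_trans (bid_var_le nv mc C σ hnv k j b' hk) ?_
          have hm : redmult nv mc σ (Sum.inl (j, σ j)) = 5 := by simp [redmult]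
          rw [hm]
          have hstep : ∀ a c : ℝ, a ≤ 5 * c → a / (nv:ℝ) ≤ 5 * (c / nv) := by
            intro a c h
            rw [← mul_div_assoc]
            exact div_le_div_of_nonneg_right h hn0.le
          cases hs : σ j <;> cases b' <;> simp [redp, redval, hs] <;>
            exact hstep _ _ (by norm_num)
      · norm_num at hx
    · simp [redx] at hx
    · simp [redx] at hx
    · simp only [redx] at hx
      split_ifs at hx with h1 h2 h3 h4 <;> (try norm_num at hx)
      · subst h1; subst h2; subst h3
        refine le_trans (bid_clause_le nv mc C σ k c 0) ?_
        simp [redmult, redval]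
      · subst h1; subst h4
        refine le_trans (bid_clause_le nv mc C σ k c 1) ?_
        simp [redmult, redval, h2]
  · -- second price
    rintro (⟨j, b⟩ | ⟨c, t⟩) (⟨j', b'⟩ | ⟨c', g⟩) hx
    · simp only [redx] at hx
      split_ifs at hx with h
      · obtain ⟨rfl, hb⟩ := h
        subst hb
        refine (csSup_insert_zero ?_ ?_ ?_).symm
        · simp only [redp]; split_ifs <;> positivity
        · refine ⟨Sum.inl (j, !σ j), by simp, ?_⟩
          have hm : redmult nv mc σ (Sum.inl (j, !σ j)) = 1 := by simp [redmult]
          rw [hm, one_mul]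
          cases hs : σ j <;> cases b' <;> simp [redp, redval, hs]
        · rintro bb ⟨k, hk, rfl⟩
          exact bid_var_le nv mc C σ hnv k j b' hk
      · norm_num at hx
    · simp [redx] at hx
    · simp [redx] at hx
    · simp only [redx] at hx
      split_ifs at hx with h1 h2 h3 h4 <;> (try norm_num at hx)
      · subst h1; subst h2; subst h3
        refine (csSup_insert_zero (by norm_num [redp]) ?_ ?_).symm
        · obtain ⟨t', ht'⟩ := hσ c
          refine ⟨Sum.inl (C c t'), by simp, ?_⟩
          rcases hC : C c t' with ⟨j, b⟩
          rw [hC] at ht'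
          simp only at ht'
          subst ht'
          have hex : ∃ t, C c t = (j, σ j) := ⟨t', hC⟩
          simp [redp, redmult, redval, hex]
          norm_num
        · rintro bb ⟨k, hk, rfl⟩
          simpa [redp] using bid_clause_le nv mc C σ k c 0
      · subst h1; subst h4
        fin_cases t
        · simp at h2
        · refine (csSup_insert_zero (by norm_num [redp]) ?_ ?_).symm
          · exact ⟨Sum.inr (c, 2), by simp [Fin.ext_iff],
              by have h20 : (2:Fin 3) ≠ 0 := by decide
                 norm_num [redp, redmult, redval, h20]⟩
          · rintro bb ⟨k, hk, rfl⟩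
            simpa [redp] using bid_clause_le nv mc C σ k c 1
        · refine (csSup_insert_zero (by norm_num [redp]) ?_ ?_).symm
          · exact ⟨Sum.inr (c, 1), by simp [Fin.ext_iff],
              by have h10 : (1:Fin 3) ≠ 0 := by decide
                 norm_num [redp, redmult, redval, h10]⟩
          · rintro bb ⟨k, hk, rfl⟩
            simpa [redp] using bid_clause_le nv mc C σ k c 1
  · -- full allocation
    rintro (⟨j', b'⟩ | ⟨c', g⟩)
    · rw [Fintype.sum_sum_type]
      have hz : ∑ q : Fin mc × Fin 3, redx nv mc σ (Sum.inr q) (Sum.inl (j', b')) = 0 :=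
        Finset.sum_eq_zero fun q _ => by obtain ⟨c, t⟩ := q; simp [redx]
      rw [hz, add_zero, Fintype.sum_prod_type]
      have h1 : ∀ j : Fin nv,
          (∑ b : Bool, redx nv mc σ (Sum.inl (j, b)) (Sum.inl (j', b')))
            = if j = j' then 1 else 0 := by
        intro j; rw [Fintype.sum_bool]; cases h : σ j <;> simp [redx, h]
      simp only [h1]
      simp
    · rw [Fintype.sum_sum_type]
      have hz : ∑ q : Fin nv × Bool, redx nv mc σ (Sum.inl q) (Sum.inr (c', g)) = 0 :=
        Finset.sum_eq_zero fun q _ => by obtain ⟨j, b⟩ := q; simp [redx]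
      rw [hz, zero_add, Fintype.sum_prod_type]
      have h2 : ∀ c : Fin mc,
          (∑ t : Fin 3, redx nv mc σ (Sum.inr (c, t)) (Sum.inr (c', g)))
            = if c = c' then 1 else 0 := by
        intro c
        fin_cases g <;> by_cases h : c = c' <;>
          simp [redx, h, Fin.sum_univ_three] <;> norm_num
      simp only [h2]
      simp

/-- if the 3SAT formula has a satisfying assignment `σ`, then with the
multipliers `redmult σ` the reduced market has an auto-bidding equilibrium in which each
true variable bidder wins both of its variable goods (at total price `0.075/n`), each clause
bidder `3^c` wins good `3^c` at price `0.5`, good `4^c` is priced at `0.5`, and total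
revenue is exactly `0.075 + m`. -/
theorem stmt11 (nv mc : ℕ) (hnv : 0 < nv) (C : Fin mc → Fin 3 → Fin nv × Bool)
    (A : ℝ) (hA : 5 ≤ A)
    (σ : Fin nv → Bool) (hσ : ∀ c, ∃ t, (C c t).2 = σ (C c t).1) :
    ∃ (x : RedBidder nv mc → RedGood nv mc → ℝ) (p : RedGood nv mc → ℝ),
      ABEquilibrium A (redval nv mc C) (redmult nv mc σ) x p ∧
      (∀ (j : Fin nv) (b' : Bool), x (Sum.inl (j, σ j)) (Sum.inl (j, b')) = 1) ∧
      (∀ j : Fin nv, p (Sum.inl (j, σ j)) + p (Sum.inl (j, !σ j)) = 0.075 / nv) ∧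
      (∀ c : Fin mc, x (Sum.inr (c, 0)) (Sum.inr (c, 0)) = 1) ∧
      (∀ c : Fin mc, p (Sum.inr (c, 0)) = 0.5 ∧ p (Sum.inr (c, 1)) = 0.5) ∧
      ∑ j, p j = 0.075 + (mc : ℝ) := by
  have hn0 : (0:ℝ) < nv := by exact_mod_cast hnv
  have hn0' : (nv:ℝ) ≠ 0 := ne_of_gt hn0
  refine ⟨redx nv mc σ, redp nv mc σ, redeq nv mc hnv C A hA σ hσ, ?_, ?_, ?_, ?_, ?_⟩
  · intro j b'; simp [redx]
  · intro j
    have e1 : redp nv mc σ (Sum.inl (j, σ j)) = 0.025 / nv := by simp [redp]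
    have e2 : redp nv mc σ (Sum.inl (j, !σ j)) = 0.05 / nv := by simp [redp]
    rw [e1, e2, ← add_div]; norm_num
  · intro c; simp [redx]
  · intro c; constructor <;> simp [redp]
  · rw [Fintype.sum_sum_type]
    have h1 : ∀ j : Fin nv, ∑ b : Bool, redp nv mc σ (Sum.inl (j, b)) = 0.075 / nv := by
      intro j
      rw [Fintype.sum_bool]
      cases h : σ j <;> simp [redp, h] <;> rw [← add_div] <;> norm_num
    have h2 : ∑ q : Fin nv × Bool, redp nv mc σ (Sum.inl q) = 0.075 := by
      rw [Fintype.sum_prod_type]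
      simp only [h1]
      rw [Finset.sum_const, Finset.card_univ, Fintype.card_fin, nsmul_eq_mul,
        mul_comm, div_mul_cancel₀ _ hn0']
    have h3 : ∑ q : Fin mc × Fin 2, redp nv mc σ (Sum.inr q) = mc := by
      rw [Fintype.sum_prod_type]
      have : ∀ c : Fin mc, ∑ g : Fin 2, redp nv mc σ (Sum.inr (c, g)) = 1 := by
        intro c; rw [Fin.sum_univ_two]; simp [redp]; norm_num
      simp only [this]
      rw [Finset.sum_const, Finset.card_univ, Fintype.card_fin, nsmul_eq_mul, mul_one]
    rw [h2, h3]
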